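/- Let H be a real Hilbert space, L a bounded nonnegative self-adjoint operator on H, P an orthogonal projection on H, and λ > 0. For g ∈ H with P g = 0, set u(t) := exp(−t(L + λP)) g (operator exponential of the bounded operator −(L + λP)). Then for every t ≥ 0 one has λ‖P u(t)‖² ≤ ⟨L g, g⟩. -/

import Mathlib

open scoped RealInnerProductSpace

set_option maxHeartbeats 1600000 in
/-- **Abstract base energy estimate (L∞-in-time form).**
Let `H` be a real Hilbert space, `L` a bounded nonnegative self-adjoint operator on `H`,
`P` an orthogonal projection on `H` (self-adjoint idempotent), and `λ > 0`. For `g ∈ H`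
with `P g = 0`, set `u t := exp (−t (L + λ P)) g`. Then for every `t ≥ 0`,
`λ ‖P (u t)‖² ≤ ⟨L g, g⟩`. -/
theorem base_energy_estimate_sup
    {H : Type*} [NormedAddCommGroup H] [InnerProductSpace ℝ H] [CompleteSpace H]
    (L P : H →L[ℝ] H)
    (hL : IsSelfAdjoint L) (hLnonneg : ∀ x : H, 0 ≤ ⟪L x, x⟫)
    (hP : IsSelfAdjoint P) (hPidem : P ∘L P = P)
    (lam : ℝ) (hlam : 0 < lam)
    (g : H) (hg : P g = 0)
    (u : ℝ → H) (hu : ∀ t : ℝ, u t = NormedSpace.exp ((-t) • (L + lam • P)) g) :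
    ∀ t : ℝ, 0 ≤ t → lam * ‖P (u t)‖ ^ 2 ≤ ⟪L g, g⟫ := by
  set A : H →L[ℝ] H := L + lam • P with hA
  have hLsym : ∀ x y : H, ⟪L x, y⟫ = ⟪x, L y⟫ := fun x y => hL.isSymmetric x y
  have hPsym : ∀ x y : H, ⟪P x, y⟫ = ⟪x, P y⟫ := fun x y => hP.isSymmetric x y
  have hAsym : ∀ x y : H, ⟪A x, y⟫ = ⟪x, A y⟫ := by
    intro x y
    simp only [hA, ContinuousLinearMap.add_apply, ContinuousLinearMap.smul_apply,
      real_inner_smul_left, real_inner_smul_right, inner_add_left, inner_add_right]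
    rw [hLsym x y, hPsym x y]
  have hPP : ∀ x : H, P (P x) = P x := fun x => ContinuousLinearMap.ext_iff.mp hPidem x
  -- derivative of u
  have hu' : ∀ t : ℝ, HasDerivAt u (-(A (u t))) t := by
    intro t
    have h1 : HasDerivAt (fun s : ℝ => NormedSpace.exp (s • A))
        (A * NormedSpace.exp ((-t) • A)) (-t) := hasDerivAt_exp_smul_const' A (-t)
    have hneg : HasDerivAt (fun s : ℝ => -s) (-1 : ℝ) t := (hasDerivAt_id t).neg
    have h2 := h1.scomp t hneg
    have h3 := h2.clm_apply (hasDerivAt_const t g)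
    have hue : u = fun s : ℝ => NormedSpace.exp ((-s) • A) g := funext hu
    rw [hue]
    have : u t = NormedSpace.exp ((-t) • A) g := hu t
    simpa [Function.comp, ContinuousLinearMap.mul_apply, ← this] using h3
  -- energy function
  set f : ℝ → ℝ := fun t => ⟪A (u t), u t⟫ with hf
  have hf' : ∀ t : ℝ, HasDerivAt f (-(2 * ‖A (u t)‖ ^ 2)) t := by
    intro t
    have hAu : HasDerivAt (fun s => A (u s)) (A (-(A (u t)))) t :=
      A.hasFDerivAt.comp_hasDerivAt t (hu' t)
    have hd := hAu.inner ℝ (hu' t)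
    refine hd.congr_deriv ?_
    have hsym : ⟪A (A (u t)), u t⟫ = ⟪A (u t), A (u t)⟫ := hAsym _ _
    simp only [inner_neg_left, inner_neg_right, map_neg]
    rw [hsym, real_inner_self_eq_norm_sq]
    ring
  have hmono : AntitoneOn f (Set.Ici 0) := by
    apply antitoneOn_of_deriv_nonpos (convex_Ici 0)
    · exact fun t _ => (hf' t).continuousAt.continuousWithinAt
    · exact fun t _ => ((hf' t).differentiableAt).differentiableWithinAt
    · intro t _
      rw [(hf' t).deriv]
      nlinarith [sq_nonneg ‖A (u t)‖]
  intro t ht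
  have hle : f t ≤ f 0 := hmono Set.self_mem_Ici ht ht
  have hf0 : f 0 = ⟪L g, g⟫ := by
    have hu0 : u 0 = g := by simp [hu 0]
    simp [hf, hu0, hA, ContinuousLinearMap.add_apply, ContinuousLinearMap.smul_apply,
      inner_add_left, real_inner_smul_left, hg]
  have hPinner : ⟪P (u t), u t⟫ = ‖P (u t)‖ ^ 2 := by
    conv_lhs => rw [← hPP (u t)]
    rw [hPsym (P (u t)) (u t), real_inner_self_eq_norm_sq]
  have key : lam * ‖P (u t)‖ ^ 2 ≤ f t := by
    have hft : f t = ⟪L (u t), u t⟫ + lam * ‖P (u t)‖ ^ 2 := by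
      simp [hf, hA, ContinuousLinearMap.add_apply, ContinuousLinearMap.smul_apply,
        inner_add_left, real_inner_smul_left, hPinner]
    rw [hft]
    linarith [hLnonneg (u t)]
  calc lam * ‖P (u t)‖ ^ 2 ≤ f t := key
    _ ≤ f 0 := hle
    _ = ⟪L g, g⟫ := hf0
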